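/- There exists an integer N₀ ≥ 2 such that for every integer N ≥ N₀ and every δv > 0, the matrix X is strictly diagonally dominant, i.e. q_i > |p_i| + |r_i| for all i = 1,…,N−1; in particular X is invertible. -/

import Mathlib

/-- The `n×n` real tridiagonal matrix with 1-indexed subdiagonal entries
`sub_{i+1}` (at position `(i+1, i)`), diagonal entries `dia_i` and superdiagonal
entries `sup_i` (at position `(i, i+1)`). -/
def triMatR (n : ℕ) (sub dia sup : ℕ → ℝ) : Matrix (Fin n) (Fin n) ℝ :=
  Matrix.of fun i j =>
    if i.val = j.val then dia (i.val + 1)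
    else if i.val + 1 = j.val then sup (i.val + 1)
    else if j.val + 1 = i.val then sub (i.val + 1)
    else 0

/-- The operator norm of a real square matrix induced by the Euclidean vector norm,
i.e. its largest singular value. -/
noncomputable def opNorm2 {n : ℕ} (M : Matrix (Fin n) (Fin n) ℝ) : ℝ :=
  ‖LinearMap.toContinuousLinearMap (Matrix.toEuclideanLin M)‖

/-- The space step `δz = (z_r - z_l)/N`. -/
noncomputable def dz (zl zr : ℝ) (N : ℕ) : ℝ := (zr - zl) / N

/-- The grid point `z_i = z_l + i δz`. -/
noncomputable def gridz (zl zr : ℝ) (N i : ℕ) : ℝ := zl + i * dz zl zr N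

/-- First-order central difference `Δ_z f_i = (f_{i+1} - f_{i-1})/(2 δz)`. -/
noncomputable def Dz (f : ℝ → ℝ) (zl zr : ℝ) (N i : ℕ) : ℝ :=
  (f (gridz zl zr N (i + 1)) - f (gridz zl zr N (i - 1))) / (2 * dz zl zr N)

/-- Second-order central difference `Δ_zz f_i = (f_{i+1} - 2 f_i + f_{i-1})/δz²`. -/
noncomputable def Dzz (f : ℝ → ℝ) (zl zr : ℝ) (N i : ℕ) : ℝ :=
  (f (gridz zl zr N (i + 1)) - 2 * f (gridz zl zr N i) + f (gridz zl zr N (i - 1))) /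
    dz zl zr N ^ 2

/-- `γ_i = a_i/b_i + (2/b_i) Δ_z b_i`. -/
noncomputable def γc (a b : ℝ → ℝ) (zl zr : ℝ) (N i : ℕ) : ℝ :=
  a (gridz zl zr N i) / b (gridz zl zr N i) +
    (2 / b (gridz zl zr N i)) * Dz b zl zr N i

/-- `ζ_i = a_i - (δz²/12)((a_i/b_i) Δ_z a_i + (2/b_i) Δ_z a_i Δ_z b_i - Δ_zz a_i)`. -/
noncomputable def ζc (a b : ℝ → ℝ) (zl zr : ℝ) (N i : ℕ) : ℝ :=
  a (gridz zl zr N i) - (dz zl zr N ^ 2 / 12) *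
    ((a (gridz zl zr N i) / b (gridz zl zr N i)) * Dz a zl zr N i +
      (2 / b (gridz zl zr N i)) * Dz a zl zr N i * Dz b zl zr N i -
      Dzz a zl zr N i)

/-- `α_i = b_i + (δz²/12)((a_i/b_i) Δ_z b_i - 2Δ_z a_i + Δ_zz b_i - (2/b_i)(Δ_z b_i)² + a_i²/b_i)`. -/
noncomputable def αc (a b : ℝ → ℝ) (zl zr : ℝ) (N i : ℕ) : ℝ :=
  b (gridz zl zr N i) + (dz zl zr N ^ 2 / 12) *
    ((a (gridz zl zr N i) / b (gridz zl zr N i)) * Dz b zl zr N i -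
      2 * Dz a zl zr N i + Dzz b zl zr N i -
      (2 / b (gridz zl zr N i)) * Dz b zl zr N i ^ 2 +
      a (gridz zl zr N i) ^ 2 / b (gridz zl zr N i))

/-- `p_i = (2 + δz γ_i)/(24 δv)`. -/
noncomputable def pc (a b : ℝ → ℝ) (zl zr : ℝ) (N : ℕ) (δv : ℝ) (i : ℕ) : ℝ :=
  (2 + dz zl zr N * γc a b zl zr N i) / (24 * δv)

/-- `q_i = 5/(6 δv)`. -/
noncomputable def qc (δv : ℝ) (i : ℕ) : ℝ := 5 / (6 * δv)

/-- `r_i = (2 - δz γ_i)/(24 δv)`. -/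
noncomputable def rc (a b : ℝ → ℝ) (zl zr : ℝ) (N : ℕ) (δv : ℝ) (i : ℕ) : ℝ :=
  (2 - dz zl zr N * γc a b zl zr N i) / (24 * δv)

/-- `l_i = -ζ_i/(2 δz) - α_i/δz²`. -/
noncomputable def lc (a b : ℝ → ℝ) (zl zr : ℝ) (N i : ℕ) : ℝ :=
  -ζc a b zl zr N i / (2 * dz zl zr N) - αc a b zl zr N i / dz zl zr N ^ 2

/-- `m_i = 2 α_i/δz²`. -/
noncomputable def mc (a b : ℝ → ℝ) (zl zr : ℝ) (N i : ℕ) : ℝ :=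
  2 * αc a b zl zr N i / dz zl zr N ^ 2

/-- `n_i = ζ_i/(2 δz) - α_i/δz²`. -/
noncomputable def nc (a b : ℝ → ℝ) (zl zr : ℝ) (N i : ℕ) : ℝ :=
  ζc a b zl zr N i / (2 * dz zl zr N) - αc a b zl zr N i / dz zl zr N ^ 2

/-- The `(N-1)×(N-1)` tridiagonal matrix `X` with `X_{i,i} = q_i`, `X_{i,i+1} = r_i`,
`X_{i+1,i} = p_{i+1}`. -/
noncomputable def Xmat (a b : ℝ → ℝ) (zl zr : ℝ) (N : ℕ) (δv : ℝ) :
    Matrix (Fin (N - 1)) (Fin (N - 1)) ℝ :=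
  triMatR (N - 1) (pc a b zl zr N δv) (qc δv) (rc a b zl zr N δv)

/-- The `(N-1)×(N-1)` tridiagonal matrix `Y` with `Y_{i,i} = m_i`, `Y_{i,i+1} = n_i`,
`Y_{i+1,i} = l_{i+1}`. -/
noncomputable def Ymat (a b : ℝ → ℝ) (zl zr : ℝ) (N : ℕ) (δv : ℝ) :
    Matrix (Fin (N - 1)) (Fin (N - 1)) ℝ :=
  triMatR (N - 1) (lc a b zl zr N) (mc a b zl zr N) (nc a b zl zr N)


private lemma sum_indicator_le {ι : Type*} [DecidableEq ι] (s : Finset ι) (P : ι → Prop)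
    [DecidablePred P] (c : ℝ) (hc : 0 ≤ c)
    (hP : ∀ x ∈ s, ∀ y ∈ s, P x → P y → x = y) :
    ∑ x ∈ s, (if P x then c else 0) ≤ c := by
  rw [← Finset.sum_filter, Finset.sum_const, nsmul_eq_mul]
  have hcard : (s.filter P).card ≤ 1 := by
    apply Finset.card_le_one.mpr
    intro x hx y hy
    simp only [Finset.mem_filter] at hx hy
    exact hP x hx.1 y hy.1 hx.2 hy.2
  calc ((s.filter P).card : ℝ) * c ≤ 1 * c := by
        apply mul_le_mul_of_nonneg_right _ hc
        exact_mod_cast hcard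
    _ = c := one_mul c

/-- There is `N₀ ≥ 2` such that for all `N ≥ N₀` and `δv > 0`, the matrix `X` is
strictly diagonally dominant, i.e. `q_i > |p_i| + |r_i|` for `i = 1, …, N-1`;
in particular `X` is invertible. -/
theorem stmt15 (zl zr : ℝ) (hz : zl < zr) (ε : ℝ) (hε : 0 < ε) (a b : ℝ → ℝ)
    (ha : ContDiffOn ℝ 2 a (Set.Icc zl zr)) (hb : ContDiffOn ℝ 2 b (Set.Icc zl zr))
    (hbe : ∀ z ∈ Set.Icc zl zr, ε ≤ b z) :
    ∃ N₀ : ℕ, 2 ≤ N₀ ∧ ∀ N, N₀ ≤ N → ∀ δv : ℝ, 0 < δv →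
      (∀ i, 1 ≤ i → i ≤ N - 1 →
        |pc a b zl zr N δv i| + |rc a b zl zr N δv i| < qc δv i) ∧
      IsUnit (Xmat a b zl zr N δv).det := by
  
  classical
  -- bound for a
  obtain ⟨A, hA⟩ := (isCompact_Icc : IsCompact (Set.Icc zl zr)).exists_bound_of_continuousOn
    (ha.continuousOn)
  set A' : ℝ := |A| + 1 with hA'def
  have hA'pos : 0 < A' := by positivity
  have hAbound : ∀ z ∈ Set.Icc zl zr, |a z| ≤ A' := by
    intro z hzmem
    have := hA z hzmem
    rw [Real.norm_eq_abs] at this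
    have : |a z| ≤ |A| := this.trans (le_abs_self A)
    linarith
  -- uniform continuity of b
  have hbu := (isCompact_Icc : IsCompact (Set.Icc zl zr)).uniformContinuousOn_of_continuous
    hb.continuousOn
  obtain ⟨δ', hδ'pos, hδ'⟩ := Metric.uniformContinuousOn_iff.mp hbu ε hε
  have hzrzl : 0 < zr - zl := sub_pos.mpr hz
  set C : ℝ := max ((zr - zl) * 2 / δ') ((zr - zl) * A' / ε) with hCdef
  refine ⟨max 2 (⌈C⌉₊ + 1), le_max_left _ _, ?_⟩
  intro N hN δv hδv
  have hN2 : 2 ≤ N := le_trans (le_max_left _ _) hN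
  have hNpos : (0 : ℝ) < N := by positivity
  have hNne : (N : ℝ) ≠ 0 := ne_of_gt hNpos
  have hCN : C < N := by
    have h1 : C ≤ (⌈C⌉₊ : ℝ) := Nat.le_ceil C
    have h2 : (⌈C⌉₊ + 1 : ℕ) ≤ N := le_trans (le_max_right _ _) hN
    have h3 : ((⌈C⌉₊ + 1 : ℕ) : ℝ) ≤ N := by exact_mod_cast h2
    push_cast at h3
    linarith
  have hdzpos : 0 < dz zl zr N := div_pos hzrzl hNpos
  -- consequences of N large
  have hdz2 : 2 * dz zl zr N < δ' := by
    have h1 : (zr - zl) * 2 / δ' < N := lt_of_le_of_lt (le_max_left _ _) hCN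
    have h2 : (zr - zl) * 2 < N * δ' := (div_lt_iff₀ hδ'pos).mp h1
    rw [dz, mul_div_assoc']
    rw [div_lt_iff₀ hNpos]
    nlinarith
  have hdzA : dz zl zr N * A' ≤ ε := by
    have h1 : (zr - zl) * A' / ε < N := lt_of_le_of_lt (le_max_right _ _) hCN
    have h2 : (zr - zl) * A' < N * ε := (div_lt_iff₀ hε).mp h1
    rw [dz, div_mul_eq_mul_div, div_le_iff₀ hNpos]
    nlinarith
  -- grid points in the interval
  have hmem : ∀ j : ℕ, j ≤ N → gridz zl zr N j ∈ Set.Icc zl zr := by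
    intro j hj
    constructor
    · have : (0:ℝ) ≤ j * dz zl zr N := by positivity
      simp only [gridz]; linarith
    · have hjN : (j : ℝ) ≤ N := by exact_mod_cast hj
      have h1 : (j : ℝ) * dz zl zr N ≤ N * dz zl zr N :=
        mul_le_mul_of_nonneg_right hjN hdzpos.le
      have h2 : (N : ℝ) * dz zl zr N = zr - zl := by
        rw [dz, mul_div_assoc']
        field_simp
      simp only [gridz]; linarith
  -- key bound on |δz γ_i|
  have key : ∀ i : ℕ, 1 ≤ i → i ≤ N - 1 → |dz zl zr N * γc a b zl zr N i| ≤ 2 := by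
    intro i hi1 hi2
    have him : i - 1 ≤ N := by omega
    have hii : i ≤ N := by omega
    have hip : i + 1 ≤ N := by omega
    set zm := gridz zl zr N (i - 1) with hzm
    set zi := gridz zl zr N i with hzi
    set zp := gridz zl zr N (i + 1) with hzp
    have hmm := hmem _ him
    have hmi := hmem _ hii
    have hmp := hmem _ hip
    have hbzi : ε ≤ b zi := hbe _ hmi
    have hbzipos : 0 < b zi := lt_of_lt_of_le hε hbzi
    have hdzne : dz zl zr N ≠ 0 := ne_of_gt hdzpos
    have hexp : dz zl zr N * γc a b zl zr N i
        = dz zl zr N * a zi / b zi + (b zp - b zm) / b zi := by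
      rw [γc, Dz]
      rw [← hzm, ← hzi, ← hzp]
      field_simp
    have hb1 : |b zp - b zm| ≤ ε := by
      have hdist : dist zp zm < δ' := by
        have : zp - zm = 2 * dz zl zr N := by
          rw [hzp, hzm, gridz, gridz]
          have : ((i - 1 : ℕ) : ℝ) = (i : ℝ) - 1 := by
            have : (1:ℕ) ≤ i := hi1
            push_cast [Nat.cast_sub this]
            ring
          rw [this]
          push_cast
          ring
        rw [Real.dist_eq, this, abs_of_pos (by positivity)]
        exact hdz2
      have := hδ' zp hmp zm hmm hdist
      rw [Real.dist_eq] at this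
      exact this.le
    have ha1 : |dz zl zr N * a zi| ≤ ε := by
      rw [abs_mul, abs_of_pos hdzpos]
      calc dz zl zr N * |a zi| ≤ dz zl zr N * A' :=
            mul_le_mul_of_nonneg_left (hAbound _ hmi) hdzpos.le
        _ ≤ ε := hdzA
    rw [hexp]
    calc |dz zl zr N * a zi / b zi + (b zp - b zm) / b zi|
        ≤ |dz zl zr N * a zi / b zi| + |(b zp - b zm) / b zi| := abs_add_le _ _
      _ = |dz zl zr N * a zi| / b zi + |b zp - b zm| / b zi := by
          rw [abs_div, abs_div, abs_of_pos hbzipos]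
      _ ≤ 1 + 1 := by
          gcongr <;> rw [div_le_one hbzipos] <;> [exact ha1.trans hbzi; exact hb1.trans hbzi]
      _ = 2 := by norm_num
  -- strict diagonal dominance for the indices
  have main : ∀ i, 1 ≤ i → i ≤ N - 1 →
      |pc a b zl zr N δv i| + |rc a b zl zr N δv i| < qc δv i := by
    intro i hi1 hi2
    have hx := key i hi1 hi2
    set x := dz zl zr N * γc a b zl zr N i with hxdef
    obtain ⟨hxl, hxr⟩ := abs_le.mp hx
    have h24 : (0:ℝ) < 24 * δv := by positivity
    have hp : pc a b zl zr N δv i = (2 + x) / (24 * δv) := rfl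
    have hr : rc a b zl zr N δv i = (2 - x) / (24 * δv) := rfl
    rw [hp, hr, abs_of_nonneg (div_nonneg (by linarith) h24.le),
      abs_of_nonneg (div_nonneg (by linarith) h24.le), ← add_div, qc]
    rw [div_lt_div_iff₀ h24 (by positivity)]
    ring_nf
    nlinarith
  refine ⟨main, ?_⟩
  -- invertibility from diagonal dominance
  apply isUnit_iff_ne_zero.mpr
  apply det_ne_zero_of_sum_row_lt_diag
  intro k
  have hk1 : 1 ≤ k.val + 1 := le_add_self
  have hk2 : k.val + 1 ≤ N - 1 := k.isLt
  have hmaink := main (k.val + 1) hk1 hk2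
  have hqpos : 0 < qc δv (k.val + 1) := by rw [qc]; positivity
  have hdiag : Xmat a b zl zr N δv k k = qc δv (k.val + 1) := by
    simp [Xmat, triMatR]
  have hbound : ∀ j ∈ Finset.univ.erase k,
      ‖Xmat a b zl zr N δv k j‖ ≤
        (if j.val = k.val + 1 then |rc a b zl zr N δv (k.val + 1)| else 0) +
        (if j.val + 1 = k.val then |pc a b zl zr N δv (k.val + 1)| else 0) := by
    intro j hj
    have hne : j ≠ k := Finset.ne_of_mem_erase hj
    have hvne : k.val ≠ j.val := fun h => hne (Fin.ext h.symm)
    simp only [Xmat, triMatR, Matrix.of_apply, if_neg hvne, Real.norm_eq_abs]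
    split_ifs with h1 h2 h3 h4 h5 <;> first
      | (exact le_add_of_nonneg_right (by positivity))
      | (exact le_add_of_nonneg_left (by positivity))
      | omega
      | simp
      | positivity
  calc ∑ j ∈ Finset.univ.erase k, ‖Xmat a b zl zr N δv k j‖
      ≤ ∑ j ∈ Finset.univ.erase k,
        ((if j.val = k.val + 1 then |rc a b zl zr N δv (k.val + 1)| else 0) +
         (if j.val + 1 = k.val then |pc a b zl zr N δv (k.val + 1)| else 0)) :=
        Finset.sum_le_sum hbound
    _ ≤ |rc a b zl zr N δv (k.val + 1)| + |pc a b zl zr N δv (k.val + 1)| := by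
        rw [Finset.sum_add_distrib]
        gcongr
        · exact sum_indicator_le _ _ _ (abs_nonneg _)
            (fun x _ y _ hx hy => Fin.ext (hx.trans hy.symm))
        · exact sum_indicator_le _ _ _ (abs_nonneg _)
            (fun x _ y _ hx hy => Fin.ext (by omega))
    _ < qc δv (k.val + 1) := by rw [add_comm]; exact hmaink
    _ = ‖Xmat a b zl zr N δv k k‖ := by
        rw [hdiag, Real.norm_eq_abs, abs_of_pos hqpos]
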